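/- Let G be a d-regular simple graph on a finite vertex set V with n vertices, where d ≥ 1, let p ∈ [0,1], let q = 1 - p, let S be a p-Bernoulli random subset of V, and let f(S) denote the number of shallow cuts of S. Then for every ε > 0, the probability that f(S) ≤ (1 - ε) · n · q · p^d is at most exp(-2 ε² q² p^(2d) n / d²). -/

import Mathlib

open Real Finset Function MeasureTheory


lemma hoeffding_core {p : ℝ} (hp0 : 0 ≤ p) (hp1 : p ≤ 1) (s : ℝ) :
    p * exp ((1 - p) * s) + (1 - p) * exp (-p * s) ≤ exp (s ^ 2 / 8) := by
  set q : ℝ := 1 - p with hq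
  have hq0 : 0 ≤ q := by simp [hq]; linarith
  -- φ and its derivatives
  set φ : ℝ → ℝ := fun s => p * exp (q * s) + q * exp (-p * s) with hφ
  have hφpos : ∀ x, 0 < φ x := by
    intro x
    have e1 : 0 < exp (q * x) := exp_pos _
    have e2 : 0 < exp (-p * x) := exp_pos _
    have h1 : 0 ≤ p * exp (q * x) := by positivity
    have h2 : 0 ≤ q * exp (-p * x) := by positivity
    rcases le_total p (1 / 2) with h | h
    · have : 0 < q * exp (-p * x) := mul_pos (by simp only [hq]; linarith) e2
      simp only [hφ]; linarith
    · have : 0 < p * exp (q * x) := mul_pos (by linarith) e1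
      simp only [hφ]; linarith
  have hφd : ∀ x, HasDerivAt φ (p * q * exp (q * x) - q * p * exp (-p * x)) x := by
    intro x
    have h1 : HasDerivAt (fun x => q * x) q x := by
      simpa using (hasDerivAt_id x).const_mul q
    have h2 : HasDerivAt (fun x => -p * x) (-p) x := by
      simpa using (hasDerivAt_id x).const_mul (-p)
    have e1 := (h1.exp).const_mul p
    have e2 := (h2.exp).const_mul q
    exact (e1.add e2).congr_deriv (by ring)
  set φ' : ℝ → ℝ := fun x => p * q * exp (q * x) - q * p * exp (-p * x) with hφ'
  have hφ'd : ∀ x, HasDerivAt φ'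
      (p * q * q * exp (q * x) + q * p * p * exp (-p * x)) x := by
    intro x
    have h1 : HasDerivAt (fun x => q * x) q x := by
      simpa using (hasDerivAt_id x).const_mul q
    have h2 : HasDerivAt (fun x => -p * x) (-p) x := by
      simpa using (hasDerivAt_id x).const_mul (-p)
    have e1 := (h1.exp).const_mul (p * q)
    have e2 := (h2.exp).const_mul (q * p)
    exact (e1.sub e2).congr_deriv (by ring)
  -- D = s/4 - φ'/φ
  set D : ℝ → ℝ := fun x => x / 4 - φ' x / φ x with hD
  have hDd : ∀ x, HasDerivAt D
      (1 / 4 - ((p * q * q * exp (q * x) + q * p * p * exp (-p * x)) * φ x - φ' x * φ' x)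
        / (φ x) ^ 2) x := by
    intro x
    have h1 : HasDerivAt (fun x : ℝ => x / 4) (1 / 4) x := by
      simpa using (hasDerivAt_id x).div_const 4
    have h2 := ((hφ'd x).div (hφd x) (hφpos x).ne')
    exact h1.sub h2
  have hDderiv_nonneg : ∀ x, 0 ≤ 1 / 4 -
      ((p * q * q * exp (q * x) + q * p * p * exp (-p * x)) * φ x - φ' x * φ' x) / (φ x) ^ 2 := by
    intro x
    set u : ℝ := p * exp (q * x) with hu
    set v : ℝ := q * exp (-p * x) with hv
    have hu0 : 0 ≤ u := by positivity
    have hv0 : 0 ≤ v := by positivity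
    have hpq : p + q = 1 := by simp [hq]
    have hnum : (p * q * q * exp (q * x) + q * p * p * exp (-p * x)) * φ x - φ' x * φ' x
        = u * v := by
      have hφx : φ x = u + v := rfl
      have hφ'x : φ' x = q * u - p * v := by simp only [hφ', hu, hv]; ring
      rw [hφx, hφ'x]
      have h1 : p * q * q * exp (q * x) = q * q * u := by rw [hu]; ring
      have h2 : q * p * p * exp (-p * x) = p * p * v := by rw [hv]; ring
      rw [h1, h2]
      linear_combination u * v * (p + q + 1) * hpq
    rw [hnum]
    have hφx2 : (φ x) ^ 2 = (u + v) ^ 2 := by rw [show φ x = u + v from rfl]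
    have huv : 0 < u + v := hφpos x
    rw [hφx2, sub_nonneg, div_le_iff₀ (by positivity : (0:ℝ) < (u + v) ^ 2)]
    nlinarith [sq_nonneg (u - v)]
  have hDmono : Monotone D :=
    monotone_of_hasDerivAt_nonneg hDd hDderiv_nonneg
  have hφ0 : φ 0 = 1 := by simp [hφ, hq]
  have hφ'0 : φ' 0 = 0 := by simp only [hφ']; simp; ring
  have hD0 : D 0 = 0 := by simp [hD, hφ'0]
  -- h = s²/8 - log φ
  set h : ℝ → ℝ := fun x => x ^ 2 / 8 - log (φ x) with hh
  have hhd : ∀ x, HasDerivAt h (D x) x := by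
    intro x
    have h1 : HasDerivAt (fun x : ℝ => x ^ 2 / 8) (x / 4) x := by
      have := (hasDerivAt_pow 2 x).div_const 8
      exact this.congr_deriv (by rw [show (2:ℕ) - 1 = 1 from rfl]; push_cast; ring)
    have h2 : HasDerivAt (fun x => log (φ x)) (φ' x / φ x) x :=
      (hφd x).log (hφpos x).ne'
    exact h1.sub h2
  have hh0 : h 0 = 0 := by simp [hh, hφ0]
  have hnonneg : ∀ x, 0 ≤ h x := by
    intro x
    rcases le_total 0 x with hx | hx
    · have hmono : MonotoneOn h (Set.Ici 0) := by
        apply monotoneOn_of_hasDerivWithinAt_nonneg (convex_Ici 0)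
          (fun y _ => (hhd y).continuousAt.continuousWithinAt)
          (fun y _ => (hhd y).hasDerivWithinAt)
        intro y hy
        rw [interior_Ici] at hy
        have : D 0 ≤ D y := hDmono (le_of_lt hy)
        rw [hD0] at this; exact this
      have := hmono Set.self_mem_Ici (Set.mem_Ici.mpr hx) hx
      rwa [hh0] at this
    · have hanti : AntitoneOn h (Set.Iic 0) := by
        apply antitoneOn_of_hasDerivWithinAt_nonpos (convex_Iic 0)
          (fun y _ => (hhd y).continuousAt.continuousWithinAt)
          (fun y _ => (hhd y).hasDerivWithinAt)
        intro y hy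
        rw [interior_Iic] at hy
        have : D y ≤ D 0 := hDmono (le_of_lt hy)
        rw [hD0] at this; exact this
      have := hanti (Set.mem_Iic.mpr hx) Set.self_mem_Iic hx
      rwa [hh0] at this
  have := hnonneg s
  have hlog : log (φ s) ≤ s ^ 2 / 8 := by simp only [hh] at this; linarith
  have := (Real.log_le_iff_le_exp (hφpos s)).mp hlog
  simpa [hφ, hq] using this

lemma hoeffding_twopoint {p : ℝ} (hp0 : 0 ≤ p) (hp1 : p ≤ 1) (t x y : ℝ) :
    p * exp (t * x) + (1 - p) * exp (t * y)
      ≤ exp (t * (p * x + (1 - p) * y) + t ^ 2 * (x - y) ^ 2 / 8) := by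
  set m : ℝ := t * (p * x + (1 - p) * y) with hm
  have e1 : t * x = m + (1 - p) * (t * (x - y)) := by rw [hm]; ring
  have e2 : t * y = m + -p * (t * (x - y)) := by rw [hm]; ring
  have e3 : m + t ^ 2 * (x - y) ^ 2 / 8 = m + (t * (x - y)) ^ 2 / 8 := by ring
  rw [e1, e2, e3, exp_add, exp_add, exp_add]
  have hcore := hoeffding_core hp0 hp1 (t * (x - y))
  nlinarith [exp_pos m, mul_le_mul_of_nonneg_left hcore (exp_nonneg m)]


section Bern

variable {V : Type*} [Fintype V] [DecidableEq V]

/-- weight of an outcome -/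
def bw (p : ℝ) (ω : V → Bool) : ℝ := ∏ v, (if ω v then p else 1 - p)

/-- expectation -/
def bE (p : ℝ) (g : (V → Bool) → ℝ) : ℝ := ∑ ω : V → Bool, bw p ω * g ω

variable {p : ℝ}

lemma bw_nonneg (hp0 : 0 ≤ p) (hp1 : p ≤ 1) (ω : V → Bool) : 0 ≤ bw p ω := by
  apply Finset.prod_nonneg
  intro v _
  split <;> linarith

lemma sum_bw : ∑ ω : V → Bool, bw p ω = 1 := by
  have h : ∀ ω : V → Bool, bw p ω = ∏ v, (fun v b => if b then p else 1 - p) v (ω v) := by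
    intro ω; rfl
  calc ∑ ω : V → Bool, bw p ω
      = ∑ ω ∈ Fintype.piFinset (fun _ : V => (Finset.univ : Finset Bool)),
          ∏ v, (fun v (b : Bool) => if b then p else 1 - p) v (ω v) := by
        rw [Fintype.piFinset_univ]; exact Finset.sum_congr rfl fun ω _ => h ω
    _ = ∏ v : V, ∑ b : Bool, (fun v (b : Bool) => if b then p else 1 - p) v b := by
        rw [Finset.prod_univ_sum]
    _ = 1 := by simp

lemma bE_const (c : ℝ) : bE p (fun _ : V → Bool => c) = c := by
  simp only [bE, ← Finset.sum_mul, sum_bw, one_mul]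

lemma bE_smul (c : ℝ) (g : (V → Bool) → ℝ) :
    bE p (fun ω => c * g ω) = c * bE p g := by
  simp only [bE, Finset.mul_sum]; exact Finset.sum_congr rfl fun ω _ => by ring

lemma bE_mono (hp0 : 0 ≤ p) (hp1 : p ≤ 1) {g h : (V → Bool) → ℝ} (hle : ∀ ω, g ω ≤ h ω) :
    bE p g ≤ bE p h := by
  apply Finset.sum_le_sum
  intro ω _
  exact mul_le_mul_of_nonneg_left (hle ω) (bw_nonneg hp0 hp1 ω)

/-- sum over the `ω v = false` slice equals a sum over the `true` slice. -/
lemma sum_slice_false (v : V) (F : (V → Bool) → ℝ) :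
    ∑ ω ∈ univ.filter (fun ω : V → Bool => ω v = false), F ω
      = ∑ ω ∈ univ.filter (fun ω : V → Bool => ω v = true), F (update ω v false) := by
  apply Finset.sum_nbij' (fun ω => update ω v true) (fun ω => update ω v false)
  · intro ω hω; simp
  · intro ω hω; simp
  · intro ω hω
    simp only [mem_filter, mem_univ, true_and] at hω
    funext u
    by_cases hu : u = v
    · subst hu; simp [hω]
    · simp [hu]
  · intro ω hω
    simp only [mem_filter, mem_univ, true_and] at hω
    funext u
    by_cases hu : u = v
    · subst hu; simp [hω]
    · simp [hu]
  · intro ω hω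
    congr 1
    funext u
    by_cases hu : u = v
    · subst hu
      simp only [mem_filter, mem_univ, true_and] at hω
      simp [hω]
    · simp [hu]

lemma bw_update (hp1 : p ≤ 1) (ω : V → Bool) (v : V) (b : Bool) :
    bw p (update ω v b) = (if b then p else 1 - p) * ∏ u ∈ univ.erase v,
      (if ω u then p else 1 - p) := by
  rw [bw, ← Finset.mul_prod_erase _ _ (mem_univ v)]
  congr 1
  · simp
  · apply Finset.prod_congr rfl
    intro u hu
    rw [update_of_ne (Finset.ne_of_mem_erase hu)]

/-- Key conditioning identity: expectation splits at a coordinate. -/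
lemma bE_update (hp1 : p ≤ 1) (v : V) (g : (V → Bool) → ℝ) :
    bE p g = p * bE p (fun ω => g (update ω v true))
      + (1 - p) * bE p (fun ω => g (update ω v false)) := by
  have key : ∀ h : (V → Bool) → ℝ,
      bE p h = ∑ ω ∈ univ.filter (fun ω : V → Bool => ω v = true),
        (bw p ω * h ω + bw p (update ω v false) * h (update ω v false)) := by
    intro h
    rw [bE, ← Finset.sum_filter_add_sum_filter_not univ (fun ω : V → Bool => ω v = true),
      Finset.sum_add_distrib]
    congr 1
    have : (univ.filter fun ω : V → Bool => ¬ω v = true)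
        = univ.filter fun ω : V → Bool => ω v = false := by
      apply Finset.filter_congr; intro ω _; simp
    rw [this, sum_slice_false v (fun ω => bw p ω * h ω)]
  rw [key g, key (fun ω => g (update ω v true)), key (fun ω => g (update ω v false)),
    Finset.mul_sum, Finset.mul_sum, ← Finset.sum_add_distrib]
  apply Finset.sum_congr rfl
  intro ω hω
  simp only [mem_filter, mem_univ, true_and] at hω
  have hωT : update ω v true = ω := by
    funext u; by_cases hu : u = v
    · subst hu; simp [hω]
    · simp [hu]
  have hFF : update (update ω v false) v false = update ω v false := by
    simp
  have hFT : update (update ω v false) v true = ω := by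
    rw [update_idem, hωT]
  have hwω : bw p ω = p * ∏ u ∈ univ.erase v, (if ω u then p else 1 - p) := by
    rw [← hωT, bw_update hp1]
    simp only [if_true]
    congr 1
    apply Finset.prod_congr rfl
    intro u hu
    rw [update_of_ne (Finset.ne_of_mem_erase hu)]
  have hwF : bw p (update ω v false) = (1 - p) * ∏ u ∈ univ.erase v,
      (if ω u then p else 1 - p) := by
    rw [bw_update hp1]; simp
  rw [hωT, hFF, hFT, hwω, hwF]
  ring


/-- A function invariant under updates outside `s` is determined by values on `s`. -/
lemma eq_of_agree (s : Finset V) (g : (V → Bool) → ℝ)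
    (hdep : ∀ ω v b, v ∉ s → g (update ω v b) = g ω) :
    ∀ ω ω' : V → Bool, (∀ v ∈ s, ω v = ω' v) → g ω = g ω' := by
  have aux : ∀ u : Finset V, ∀ ω ω' : V → Bool,
      (∀ v, v ∉ u → ω v = ω' v) → (∀ v ∈ u, v ∉ s) → g ω = g ω' := by
    intro u
    induction u using Finset.induction_on with
    | empty =>
      intro ω ω' hagree _
      congr 1
      funext v
      exact hagree v (Finset.notMem_empty v)
    | @insert a u _ ih =>
      intro ω ω' hagree hnot
      have hans : a ∉ s := hnot a (Finset.mem_insert_self a u)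
      have h1 : g ω = g (update ω a (ω' a)) := (hdep ω a (ω' a) hans).symm
      rw [h1]
      apply ih
      · intro v hv
        by_cases hva : v = a
        · subst hva; simp
        · rw [update_of_ne hva]
          exact hagree v (by simp [hva, hv])
      · intro v hv
        exact hnot v (Finset.mem_insert_of_mem hv)
  intro ω ω' hagree
  apply aux (Finset.univ \ s)
  · intro v hv
    rw [Finset.mem_sdiff] at hv
    push_neg at hv
    exact hagree v (hv (mem_univ v))
  · intro v hv
    exact (Finset.mem_sdiff.mp hv).2

lemma abs_bE_le (hp0 : 0 ≤ p) (hp1 : p ≤ 1) (g : (V → Bool) → ℝ) (c : ℝ)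
    (hg : ∀ ω, |g ω| ≤ c) : |bE p g| ≤ c := by
  have h1 : bE p g ≤ c := by
    have := bE_mono hp0 hp1 (g := g) (h := fun _ => c) (fun ω => (abs_le.mp (hg ω)).2)
    rwa [bE_const] at this
  have h2 : -c ≤ bE p g := by
    have := bE_mono hp0 hp1 (g := fun _ => -c) (h := g) (fun ω => (abs_le.mp (hg ω)).1)
    rwa [bE_const] at this
  exact abs_le.mpr ⟨h2, h1⟩

/-- Discrete McDiarmid MGF bound. -/
lemma bE_exp_le (hp0 : 0 ≤ p) (hp1 : p ≤ 1) (c : ℝ) (hc : 0 ≤ c) (s : Finset V) :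
    ∀ g : (V → Bool) → ℝ,
      (∀ ω v b, v ∉ s → g (update ω v b) = g ω) →
      (∀ ω v, |g (update ω v true) - g (update ω v false)| ≤ c) →
      ∀ t : ℝ, bE p (fun ω => exp (t * g ω))
        ≤ exp (t * bE p g + t ^ 2 * s.card * c ^ 2 / 8) := by
  induction s using Finset.induction_on with
  | empty =>
    intro g hdep hlip t
    have hconst : ∀ ω : V → Bool, g ω = g (fun _ => false) :=
      fun ω => eq_of_agree ∅ g hdep ω (fun _ => false) (by simp)
    have h1 : bE p (fun ω => exp (t * g ω)) = exp (t * g (fun _ => false)) := by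
      have : (fun ω : V → Bool => exp (t * g ω)) = fun _ => exp (t * g (fun _ => false)) := by
        funext ω; rw [hconst ω]
      rw [this, bE_const]
    have h2 : bE p g = g (fun _ => false) := by
      have : g = fun _ : V → Bool => g (fun _ => false) := by funext ω; rw [hconst ω]
      rw [this, bE_const]
    rw [h1, h2]
    simp
  | @insert a s ha ih =>
    intro g hdep hlip t
    set gT : (V → Bool) → ℝ := fun ω => g (update ω a true) with hgT
    set gF : (V → Bool) → ℝ := fun ω => g (update ω a false) with hgF
    have hdepT : ∀ (b' : Bool), ∀ ω v b, v ∉ s →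
        g (update (update ω v b) a b') = g (update ω a b') := by
      intro b' ω v b hv
      by_cases hva : v = a
      · subst hva; rw [update_idem]
      · rw [update_comm hva]
        exact hdep (update ω a b') v b (by simp [hva, hv])
    have hlipT : ∀ (b' : Bool), ∀ ω v,
        |g (update (update ω v true) a b') - g (update (update ω v false) a b')| ≤ c := by
      intro b' ω v
      by_cases hva : v = a
      · subst hva
        rw [update_idem, update_idem, sub_self, abs_zero]
        exact hc
      · rw [update_comm hva, update_comm hva]
        exact hlip (update ω a b') v
    have key := bE_update (p := p) hp1 a (fun ω => exp (t * g ω))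
    have hT := ih gT (hdepT true) (hlipT true) t
    have hF := ih gF (hdepT false) (hlipT false) t
    set K : ℝ := t ^ 2 * s.card * c ^ 2 / 8 with hK
    have hKnn : 0 ≤ K := by positivity
    have hq0 : (0:ℝ) ≤ 1 - p := by linarith
    calc bE p (fun ω => exp (t * g ω))
        = p * bE p (fun ω => exp (t * gT ω)) + (1 - p) * bE p (fun ω => exp (t * gF ω)) := key
      _ ≤ p * exp (t * bE p gT + K) + (1 - p) * exp (t * bE p gF + K) := by
          apply add_le_add
          · exact mul_le_mul_of_nonneg_left hT hp0
          · exact mul_le_mul_of_nonneg_left hF hq0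
      _ = exp K * (p * exp (t * bE p gT) + (1 - p) * exp (t * bE p gF)) := by
          rw [exp_add, exp_add]; ring
      _ ≤ exp K * exp (t * (p * bE p gT + (1 - p) * bE p gF)
            + t ^ 2 * (bE p gT - bE p gF) ^ 2 / 8) := by
          apply mul_le_mul_of_nonneg_left (hoeffding_twopoint hp0 hp1 t _ _) (exp_nonneg K)
      _ ≤ exp (t * bE p g + t ^ 2 * (insert a s).card * c ^ 2 / 8) := by
          rw [← exp_add]
          apply exp_le_exp.mpr
          have hEg : p * bE p gT + (1 - p) * bE p gF = bE p g := (bE_update hp1 a g).symm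
          have habs : |bE p gT - bE p gF| ≤ c := by
            have : bE p gT - bE p gF = bE p (fun ω => gT ω - gF ω) := by
              simp only [bE, ← Finset.sum_sub_distrib]
              exact Finset.sum_congr rfl fun ω _ => by ring
            rw [this]
            apply abs_bE_le hp0 hp1
            intro ω
            exact hlip ω a
          have hsq : (bE p gT - bE p gF) ^ 2 ≤ c ^ 2 := by
            have := sq_abs (bE p gT - bE p gF)
            nlinarith [abs_nonneg (bE p gT - bE p gF)]
          have hcard : ((insert a s).card : ℝ) = s.card + 1 := by
            rw [Finset.card_insert_of_notMem ha]
            push_cast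
            ring
          rw [hEg, hK, hcard]
          have ht2 : 0 ≤ t ^ 2 := sq_nonneg t
          nlinarith [ht2, hsq]

/-- Chernoff bound for the lower tail. -/
lemma chernoff (hp0 : 0 ≤ p) (hp1 : p ≤ 1) (g : (V → Bool) → ℝ) (a t : ℝ) (ht : 0 ≤ t) :
    ∑ ω ∈ univ.filter (fun ω : V → Bool => g ω ≤ a), bw p ω
      ≤ exp (t * a) * bE p (fun ω => exp (-t * g ω)) := by
  have h1 : ∑ ω ∈ univ.filter (fun ω : V → Bool => g ω ≤ a), bw p ω
      ≤ ∑ ω ∈ univ.filter (fun ω : V → Bool => g ω ≤ a),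
          bw p ω * exp (t * a - t * g ω) := by
    apply Finset.sum_le_sum
    intro ω hω
    simp only [mem_filter, mem_univ, true_and] at hω
    have : (1:ℝ) ≤ exp (t * a - t * g ω) := by
      rw [← exp_zero]
      apply exp_le_exp.mpr
      have : 0 ≤ t * (a - g ω) := mul_nonneg ht (by linarith)
      nlinarith
    calc bw p ω = bw p ω * 1 := by ring
      _ ≤ bw p ω * exp (t * a - t * g ω) :=
          mul_le_mul_of_nonneg_left this (bw_nonneg hp0 hp1 ω)
  have h2 : ∑ ω ∈ univ.filter (fun ω : V → Bool => g ω ≤ a),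
        bw p ω * exp (t * a - t * g ω)
      ≤ ∑ ω : V → Bool, bw p ω * exp (t * a - t * g ω) := by
    apply Finset.sum_le_sum_of_subset_of_nonneg (Finset.filter_subset _ _)
    intro ω _ _
    exact mul_nonneg (bw_nonneg hp0 hp1 ω) (exp_nonneg _)
  have h3 : ∑ ω : V → Bool, bw p ω * exp (t * a - t * g ω)
      = exp (t * a) * bE p (fun ω => exp (-t * g ω)) := by
    rw [bE, Finset.mul_sum]
    apply Finset.sum_congr rfl
    intro ω _
    rw [show t * a - t * g ω = t * a + -t * g ω by ring, exp_add]
    ring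
  linarith

end Bern




section Graph

variable {V : Type*} [Fintype V] [DecidableEq V] {p : ℝ}

lemma bE_sum {ι : Type*} (s : Finset ι) (h : ι → (V → Bool) → ℝ) :
    bE p (fun ω => ∑ i ∈ s, h i ω) = ∑ i ∈ s, bE p (h i) := by
  simp only [bE, Finset.mul_sum]
  rw [Finset.sum_comm]

lemma bE_prod (hp1 : p ≤ 1) (s : Finset V) (F : V → Bool → ℝ) :
    bE p (fun ω => ∏ u ∈ s, F u (ω u)) = ∏ u ∈ s, (p * F u true + (1 - p) * F u false) := by
  induction s using Finset.induction_on with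
  | empty => simp [bE_const]
  | @insert a s ha ih =>
    have step : bE p (fun ω => ∏ u ∈ insert a s, F u (ω u))
        = p * (F a true * bE p (fun ω => ∏ u ∈ s, F u (ω u)))
          + (1 - p) * (F a false * bE p (fun ω => ∏ u ∈ s, F u (ω u))) := by
      rw [bE_update hp1 a (fun ω => ∏ u ∈ insert a s, F u (ω u))]
      congr 1
      · congr 1
        rw [← bE_smul]
        apply congrArg
        funext ω
        rw [Finset.prod_insert ha, update_self]
        congr 1
        apply Finset.prod_congr rfl
        intro u hu
        rw [update_of_ne (by rintro rfl; exact ha hu)]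
      · congr 1
        rw [← bE_smul]
        apply congrArg
        funext ω
        rw [Finset.prod_insert ha, update_self]
        congr 1
        apply Finset.prod_congr rfl
        intro u hu
        rw [update_of_ne (by rintro rfl; exact ha hu)]
    rw [step, ih, Finset.prod_insert ha]
    ring

variable (G : SimpleGraph V) [DecidableRel G.Adj]

/-- the shallow-cut count -/
def scount (ω : V → Bool) : ℝ :=
  ((Finset.univ.filter fun v : V =>
      ω v = false ∧ ∀ w ∈ G.neighborFinset v, ω w = true).card : ℝ)

lemma bE_scount (hp0 : 0 ≤ p) (hp1 : p ≤ 1) {d : ℕ} (hreg : G.IsRegularOfDegree d) :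
    bE p (scount G) = (Fintype.card V : ℝ) * (1 - p) * p ^ d := by
  have hcount : ∀ ω : V → Bool, scount G ω = ∑ v : V,
      (if (ω v = false ∧ ∀ w ∈ G.neighborFinset v, ω w = true) then (1:ℝ) else 0) := by
    intro ω
    rw [scount, Finset.card_filter]
    push_cast
    rfl
  have h1 : bE p (scount G) = ∑ v : V, bE p (fun ω =>
      if (ω v = false ∧ ∀ w ∈ G.neighborFinset v, ω w = true) then (1:ℝ) else 0) := by
    rw [show scount G = fun ω => ∑ v : V,
      (if (ω v = false ∧ ∀ w ∈ G.neighborFinset v, ω w = true) then (1:ℝ) else 0)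
      from funext hcount]
    exact bE_sum univ _
  rw [h1]
  have h2 : ∀ v : V, bE p (fun ω =>
      if (ω v = false ∧ ∀ w ∈ G.neighborFinset v, ω w = true) then (1:ℝ) else 0)
      = (1 - p) * p ^ d := by
    intro v
    have hvn : v ∉ G.neighborFinset v := G.notMem_neighborFinset_self v
    set F : V → Bool → ℝ := fun u b =>
      if u = v then (if b then 0 else 1) else (if b then 1 else 0) with hF
    have hind : ∀ ω : V → Bool,
        (if (ω v = false ∧ ∀ w ∈ G.neighborFinset v, ω w = true) then (1:ℝ) else 0)
          = ∏ u ∈ insert v (G.neighborFinset v), F u (ω u) := by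
      intro ω
      by_cases hcond : ω v = false ∧ ∀ w ∈ G.neighborFinset v, ω w = true
      · rw [if_pos hcond]
        symm
        apply Finset.prod_eq_one
        intro u hu
        rcases Finset.mem_insert.mp hu with hu | hu
        · subst hu; simp [hF, hcond.1]
        · have huv : u ≠ v := fun h => hvn (h ▸ hu)
          simp [hF, huv, hcond.2 u hu]
      · rw [if_neg hcond]
        push_neg at hcond
        by_cases hv : ω v = false
        · obtain ⟨w, hw, hwf⟩ := hcond hv
          symm
          apply Finset.prod_eq_zero (Finset.mem_insert_of_mem hw)
          have hwv : w ≠ v := fun h => hvn (h ▸ hw)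
          simp only [hF, if_neg hwv]
          simp [Bool.not_eq_true] at hwf
          simp [hwf]
        · symm
          apply Finset.prod_eq_zero (Finset.mem_insert_self v _)
          simp only [hF, if_pos rfl]
          simp [Bool.not_eq_false] at hv
          simp [hv]
    rw [show (fun ω : V → Bool =>
        if (ω v = false ∧ ∀ w ∈ G.neighborFinset v, ω w = true) then (1:ℝ) else 0)
        = fun ω => ∏ u ∈ insert v (G.neighborFinset v), F u (ω u) from funext hind]
    rw [bE_prod hp1]
    rw [Finset.prod_insert hvn]
    have hFv : p * F v true + (1 - p) * F v false = 1 - p := by simp [hF]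
    have hFw : ∀ w ∈ G.neighborFinset v, p * F w true + (1 - p) * F w false = p := by
      intro w hw
      have hwv : w ≠ v := fun h => hvn (h ▸ hw)
      simp [hF, hwv]
    rw [hFv, Finset.prod_congr rfl hFw, Finset.prod_const,
      G.card_neighborFinset_eq_degree, hreg v]
  rw [Finset.sum_congr rfl (fun v _ => h2 v), Finset.sum_const, Finset.card_univ,
    nsmul_eq_mul]
  ring

lemma scount_lipschitz {d : ℕ} (hd : 1 ≤ d) (hreg : G.IsRegularOfDegree d)
    (ω : V → Bool) (v : V) :
    |scount G (update ω v true) - scount G (update ω v false)| ≤ (d : ℝ) := by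
  classical
  set P : (V → Bool) → V → Prop := fun σ u =>
    σ u = false ∧ ∀ w ∈ G.neighborFinset u, σ w = true with hP
  set ST : Finset V := univ.filter (P (update ω v true)) with hST
  set SF : Finset V := univ.filter (P (update ω v false)) with hSF
  have hTsub : ST ⊆ SF ∪ G.neighborFinset v := by
    intro u hu
    rw [hST, Finset.mem_filter] at hu
    obtain ⟨-, hu1, hu2⟩ := hu
    by_cases hun : u ∈ G.neighborFinset v
    · exact Finset.mem_union_right _ hun
    · apply Finset.mem_union_left
      have huv : u ≠ v := by
        intro h
        subst h
        rw [update_self] at hu1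
        simp at hu1
      rw [hSF, Finset.mem_filter]
      refine ⟨mem_univ u, ?_, ?_⟩
      · rw [update_of_ne huv]
        rwa [update_of_ne huv] at hu1
      · intro w hw
        have hwv : w ≠ v := by
          intro h
          apply hun
          rw [SimpleGraph.mem_neighborFinset] at hw ⊢
          exact (h ▸ hw).symm
        rw [update_of_ne hwv]
        have := hu2 w hw
        rwa [update_of_ne hwv] at this
  have hFsub : SF ⊆ ST ∪ {v} := by
    intro u hu
    rw [hSF, Finset.mem_filter] at hu
    obtain ⟨-, hu1, hu2⟩ := hu
    by_cases huv : u = v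
    · exact Finset.mem_union_right _ (Finset.mem_singleton.mpr huv)
    · apply Finset.mem_union_left
      rw [hST, Finset.mem_filter]
      refine ⟨mem_univ u, ?_, ?_⟩
      · rw [update_of_ne huv]
        rwa [update_of_ne huv] at hu1
      · intro w hw
        by_cases hwv : w = v
        · subst hwv; rw [update_self]
        · rw [update_of_ne hwv]
          have := hu2 w hw
          rwa [update_of_ne hwv] at this
  have hcT : ST.card ≤ SF.card + d := by
    calc ST.card ≤ (SF ∪ G.neighborFinset v).card := Finset.card_le_card hTsub
      _ ≤ SF.card + (G.neighborFinset v).card := Finset.card_union_le _ _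
      _ = SF.card + d := by rw [G.card_neighborFinset_eq_degree, hreg v]
  have hcF : SF.card ≤ ST.card + d := by
    calc SF.card ≤ (ST ∪ {v}).card := Finset.card_le_card hFsub
      _ ≤ ST.card + 1 := by
          refine le_trans (Finset.card_union_le _ _) ?_
          simp
      _ ≤ ST.card + d := by omega
  have heT : scount G (update ω v true) = (ST.card : ℝ) := rfl
  have heF : scount G (update ω v false) = (SF.card : ℝ) := rfl
  rw [heT, heF, abs_sub_le_iff]
  constructor
  · have := hcT
    push_cast
    have : (ST.card : ℝ) ≤ SF.card + d := by exact_mod_cast hcT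
    linarith
  · have : (SF.card : ℝ) ≤ ST.card + d := by exact_mod_cast hcF
    linarith

end Graph



section Meas

variable {V : Type*} [Fintype V] [DecidableEq V] {p : ℝ}

lemma measure_pi_singleton (hp0 : 0 ≤ p) (hp1 : p ≤ 1) (ω : V → Bool) :
    (Measure.pi fun _ : V =>
        (PMF.bernoulli (Real.toNNReal p) (Real.toNNReal_le_one.mpr hp1)).toMeasure)
      {ω} = ENNReal.ofReal (bw p ω) := by
  have h1 : ({ω} : Set (V → Bool)) = Set.pi Set.univ (fun v => {ω v}) := by
    rw [Set.univ_pi_singleton]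
  rw [h1, Measure.pi_pi]
  have h2 : ∀ v : V,
      (PMF.bernoulli (Real.toNNReal p) (Real.toNNReal_le_one.mpr hp1)).toMeasure {ω v}
        = ENNReal.ofReal (if ω v then p else 1 - p) := by
    intro v
    rw [PMF.toMeasure_apply_singleton _ _ (measurableSet_singleton _)]
    rw [PMF.bernoulli_apply]
    cases hv : ω v
    · simp only [Bool.cond_false, if_false]
      rw [if_neg Bool.false_ne_true, ENNReal.ofReal_sub _ hp0, ENNReal.ofReal_one, ENNReal.coe_sub, ENNReal.coe_one, ENNReal.ofReal]
    · simp; rfl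
  rw [Finset.prod_congr rfl (fun v _ => h2 v)]
  rw [← ENNReal.ofReal_prod_of_nonneg]
  · rfl
  · intro v _
    split <;> linarith

lemma measure_pi_eq_sum (hp0 : 0 ≤ p) (hp1 : p ≤ 1) (A : Set (V → Bool))
    [DecidablePred (· ∈ A)] :
    (Measure.pi fun _ : V =>
        (PMF.bernoulli (Real.toNNReal p) (Real.toNNReal_le_one.mpr hp1)).toMeasure)
      A = ENNReal.ofReal (∑ ω ∈ univ.filter (· ∈ A), bw p ω) := by
  have hA : A = ⋃ ω ∈ (univ.filter (· ∈ A) : Finset (V → Bool)), ({ω} : Set (V → Bool)) := by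
    ext ω
    simp
  have h0 : (Measure.pi fun _ : V =>
        (PMF.bernoulli (Real.toNNReal p) (Real.toNNReal_le_one.mpr hp1)).toMeasure) A
      = (Measure.pi fun _ : V =>
        (PMF.bernoulli (Real.toNNReal p) (Real.toNNReal_le_one.mpr hp1)).toMeasure)
        (⋃ ω ∈ (univ.filter (· ∈ A) : Finset (V → Bool)), ({ω} : Set (V → Bool))) :=
    congrArg _ hA
  rw [h0, measure_biUnion_finset]
  · rw [Finset.sum_congr rfl (fun ω _ => measure_pi_singleton hp0 hp1 ω)]
    rw [ENNReal.ofReal_sum_of_nonneg]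
    intro ω _
    exact bw_nonneg hp0 hp1 ω
  · intro ω hω ω' hω' hne
    simp only [Set.disjoint_singleton_left, Set.mem_singleton_iff]
    exact hne
  · intro ω _
    exact measurableSet_singleton ω

end Meas


/-- Let `G` be a `d`-regular graph on a finite vertex set `V` with `n` vertices,
`d ≥ 1`, let `p ∈ [0,1]`, `q = 1 - p`, and let `S` be a `p`-Bernoulli random subset of `V`,
modelled by the product of Bernoulli(`p`) measures on `V → Bool`.  Let `f S` be the number of
shallow cuts of `S` (vertices `v ∉ S` all of whose neighbors are in `S`).  Then for every
`ε > 0`, the probability that `f S ≤ (1 - ε) n q p^d` is at most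
`exp (-2 ε² q² p^(2d) n / d²)`. -/
theorem shallow_cuts_concentration {V : Type*} [Fintype V] [DecidableEq V]
    (G : SimpleGraph V) [DecidableRel G.Adj] (d : ℕ) (hd : 1 ≤ d)
    (hreg : G.IsRegularOfDegree d) (p q : ℝ) (hp0 : 0 ≤ p) (hp1 : p ≤ 1) (hq : q = 1 - p)
    (ε : ℝ) (hε : 0 < ε) :
    (Measure.pi fun _ : V =>
        (PMF.bernoulli (Real.toNNReal p) (Real.toNNReal_le_one.mpr hp1)).toMeasure)
      {ω : V → Bool |
        ((Finset.univ.filter fun v : V =>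
            ω v = false ∧ ∀ w ∈ G.neighborFinset v, ω w = true).card : ℝ)
          ≤ (1 - ε) * (Fintype.card V : ℝ) * q * p ^ d}
      ≤ ENNReal.ofReal
          (Real.exp (-2 * ε ^ 2 * q ^ 2 * p ^ (2 * d) * (Fintype.card V : ℝ) / (d : ℝ) ^ 2)) := by
  classical
  subst hq
  set n : ℝ := (Fintype.card V : ℝ) with hn
  have hn0 : 0 ≤ n := by positivity
  have hq0 : 0 ≤ 1 - p := by linarith
  have hd0 : (0:ℝ) < (d:ℝ) := by exact_mod_cast hd
  have hp2d : p ^ (2 * d) = (p ^ d) ^ 2 := by rw [mul_comm, pow_mul]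
  set a : ℝ := (1 - ε) * n * (1 - p) * p ^ d with ha
  set A : Set (V → Bool) := {ω : V → Bool |
        ((Finset.univ.filter fun v : V =>
            ω v = false ∧ ∀ w ∈ G.neighborFinset v, ω w = true).card : ℝ)
          ≤ (1 - ε) * n * (1 - p) * p ^ d} with hA
  by_cases hzero : n * ((1 - p) * p ^ d) = 0
  · have hexp0 : -2 * ε ^ 2 * (1 - p) ^ 2 * p ^ (2 * d) * n / (d : ℝ) ^ 2 = 0 := by
      have h1 : (1 - p) ^ 2 * p ^ (2 * d) * n = ((1 - p) * p ^ d) ^ 2 * n := by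
        rw [hp2d]; ring
      rcases mul_eq_zero.mp hzero with h | h
      · rw [h]; simp
      · have : -2 * ε ^ 2 * (1 - p) ^ 2 * p ^ (2 * d) * n
            = -2 * ε ^ 2 * (((1 - p) * p ^ d) ^ 2 * n) := by rw [hp2d]; ring
        rw [this, h]
        simp
    rw [hexp0, Real.exp_zero, ENNReal.ofReal_one]
    exact prob_le_one
  · have hnpos : 0 < n := by
      rcases lt_or_eq_of_le hn0 with h | h
      · exact h
      · exact absurd (by rw [← h]; ring) hzero
    have hqp : 0 < (1 - p) * p ^ d := by
      rcases lt_or_eq_of_le (mul_nonneg hq0 (pow_nonneg hp0 d)) with h | h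
      · exact h
      · exact absurd (by rw [← h]; ring) hzero
    set δ : ℝ := ε * n * ((1 - p) * p ^ d) with hδ
    have hδpos : 0 < δ := by positivity
    set t : ℝ := 4 * δ / (n * (d:ℝ) ^ 2) with ht
    have htpos : 0 < t := by positivity
    -- expectation of scount
    have hM : bE p (scount G) = n * (1 - p) * p ^ d := bE_scount G hp0 hp1 hreg
    -- MGF bound
    have hmgf := bE_exp_le hp0 hp1 (d : ℝ) (le_of_lt hd0) (univ : Finset V) (scount G)
      (fun ω v b hv => absurd (mem_univ v) hv)
      (fun ω v => scount_lipschitz G hd hreg ω v) (-t)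
    have hchern := chernoff hp0 hp1 (scount G) a t (le_of_lt htpos)
    have hcard : ((univ : Finset V).card : ℝ) = n := by rw [Finset.card_univ]
    -- combine
    have hcomb : ∑ ω ∈ univ.filter (fun ω : V → Bool => scount G ω ≤ a), bw p ω
        ≤ Real.exp (-2 * ε ^ 2 * (1 - p) ^ 2 * p ^ (2 * d) * n / (d : ℝ) ^ 2) := by
      have h1 : ∑ ω ∈ univ.filter (fun ω : V → Bool => scount G ω ≤ a), bw p ω
          ≤ Real.exp (t * a) * Real.exp (-t * bE p (scount G)
              + (-t) ^ 2 * ((univ : Finset V).card : ℝ) * (d:ℝ) ^ 2 / 8) := by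
        refine le_trans hchern ?_
        exact mul_le_mul_of_nonneg_left hmgf (Real.exp_nonneg _)
      rw [← Real.exp_add, hM, hcard] at h1
      refine le_trans h1 (Real.exp_le_exp.mpr (le_of_eq ?_))
      have hexp : t * a + (-t * (n * (1 - p) * p ^ d) + (-t) ^ 2 * n * (d:ℝ) ^ 2 / 8)
          = -t * δ + t ^ 2 * n * (d:ℝ) ^ 2 / 8 := by
        rw [ha, hδ]; ring
      rw [hexp, ht]
      rw [hp2d, hδ]
      field_simp
      ring
    -- convert measure to sum
    have hfilter : (univ.filter (· ∈ A) : Finset (V → Bool))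
        = univ.filter (fun ω : V → Bool => scount G ω ≤ a) := by
      apply Finset.filter_congr
      intro ω _
      rw [hA]
      simp only [Set.mem_setOf_eq]
      rfl
    calc (Measure.pi fun _ : V =>
        (PMF.bernoulli (Real.toNNReal p) (Real.toNNReal_le_one.mpr hp1)).toMeasure) A
        = ENNReal.ofReal (∑ ω ∈ univ.filter (· ∈ A), bw p ω) :=
          measure_pi_eq_sum hp0 hp1 A
      _ = ENNReal.ofReal (∑ ω ∈ univ.filter (fun ω : V → Bool => scount G ω ≤ a), bw p ω) := by
          rw [hfilter]
      _ ≤ ENNReal.ofReal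
          (Real.exp (-2 * ε ^ 2 * (1 - p) ^ 2 * p ^ (2 * d) * n / (d : ℝ) ^ 2)) :=
          ENNReal.ofReal_le_ofReal hcomb
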